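/- The set of solutions to $x^9 = 1$ in the finite field $\mathbb{F}_{64}$ is a cap set of size 9: it has exactly 9 elements and there are no pairwise distinct $a,b,c,d$ in it with $a+b+c+d = 0$. -/

import Mathlib

theorem stmt8 (F : Type*) [Field F] [Fintype F] (hF : Fintype.card F = 64) :
    ({x : F | x ^ 9 = 1}).ncard = 9 ∧
    ¬ ∃ a b c d : F, a ∈ {x : F | x ^ 9 = 1} ∧ b ∈ {x : F | x ^ 9 = 1} ∧
      c ∈ {x : F | x ^ 9 = 1} ∧ d ∈ {x : F | x ^ 9 = 1} ∧
      a ≠ b ∧ a ≠ c ∧ a ≠ d ∧ b ≠ c ∧ b ≠ d ∧ c ≠ d ∧ a + b + c + d = 0 := by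
  -- characteristic 2
  have hcast : ((64 : ℕ) : F) = 0 := by rw [← hF]; exact Nat.cast_card_eq_zero F
  have h2 : (2 : F) = 0 := by
    have h64 : (2 : F) ^ 6 = 0 := by push_cast at hcast; linear_combination hcast
    exact pow_eq_zero_iff (by norm_num) |>.mp h64
  haveI : CharP F 2 := (CharP.charP_iff_prime_eq_zero Nat.prime_two).mpr h2
  haveI : Fact (Nat.Prime 2) := ⟨Nat.prime_two⟩
  constructor
  · -- cardinality part
    obtain ⟨g, hg⟩ := IsCyclic.exists_generator (α := Fˣ)
    have hcardu : Nat.card Fˣ = 63 := by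
      rw [Nat.card_units, Nat.card_eq_fintype_card, hF]
    have horder : orderOf g = 63 := by
      rw [orderOf_eq_card_of_forall_mem_zpowers hg, hcardu]
    have hzeta : orderOf (g ^ 7) = 9 := by
      rw [orderOf_pow, horder]; norm_num
    have hprim : IsPrimitiveRoot ((g ^ 7 : Fˣ) : F) 9 := by
      rw [IsPrimitiveRoot.coe_units_iff]
      exact hzeta ▸ IsPrimitiveRoot.orderOf (g ^ 7)
    have hset : {x : F | x ^ 9 = 1} = ↑(Polynomial.nthRootsFinset 9 (1 : F)) := by
      ext x
      simp [Polynomial.mem_nthRootsFinset (by norm_num : 0 < 9) (1 : F)]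
    rw [hset, Set.ncard_coe_finset, hprim.card_nthRootsFinset]
  · rintro ⟨a, b, c, d, ha9, hb9, hc9, hd9, hab, hac, had, hbc, hbd, hcd, hsum⟩
    simp only [Set.mem_setOf_eq] at ha9 hb9 hc9 hd9
    have ha0 : a ≠ 0 := fun h => by simp [h] at ha9
    have hb0 : b ≠ 0 := fun h => by simp [h] at hb9
    have hc0 : c ≠ 0 := fun h => by simp [h] at hc9
    have hd0 : d ≠ 0 := fun h => by simp [h] at hd9
    have key16 : ∀ x y : F, (x + y) ^ 16 = x ^ 16 + y ^ 16 := by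
      intro x y
      have := add_pow_char_pow x y (R := F) (p := 2) (n := 4)
      norm_num at this; exact this
    have key32 : ∀ x y : F, (x + y) ^ 32 = x ^ 32 + y ^ 32 := by
      intro x y
      have := add_pow_char_pow x y (R := F) (p := 2) (n := 5)
      norm_num at this; exact this
    have h16 : a ^ 16 + b ^ 16 + c ^ 16 + d ^ 16 = 0 := by
      have h : ((a + b) + (c + d)) ^ 16 = 0 := by
        rw [show a + b + (c + d) = a + b + c + d by ring, hsum]; norm_num
      rw [key16, key16, key16] at h
      linear_combination h
    have h32 : a ^ 32 + b ^ 32 + c ^ 32 + d ^ 32 = 0 := by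
      have h : ((a + b) + (c + d)) ^ 32 = 0 := by
        rw [show a + b + (c + d) = a + b + c + d by ring, hsum]; norm_num
      rw [key32, key32, key32] at h
      linear_combination h
    have h7 : a ^ 7 + b ^ 7 + c ^ 7 + d ^ 7 = 0 := by
      linear_combination h16 - a ^ 7 * ha9 - b ^ 7 * hb9 - c ^ 7 * hc9 - d ^ 7 * hd9
    have h5 : a ^ 5 + b ^ 5 + c ^ 5 + d ^ 5 = 0 := by
      linear_combination h32 - a ^ 5 * (a ^ 18 + a ^ 9 + 1) * ha9 -
        b ^ 5 * (b ^ 18 + b ^ 9 + 1) * hb9 - c ^ 5 * (c ^ 18 + c ^ 9 + 1) * hc9 -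
        d ^ 5 * (d ^ 18 + d ^ 9 + 1) * hd9
    -- substitute d = a + b + c
    have hd' : d = a + b + c := by linear_combination d * h2 - hsum
    subst hd'
    -- nonzero differences
    have hu : a + b ≠ 0 := fun h => hab (by linear_combination h - b * h2)
    have hv : b + c ≠ 0 := fun h => hbc (by linear_combination h - c * h2)
    have hw : a + c ≠ 0 := fun h => hac (by linear_combination h - c * h2)
    -- from h5 : Q = 0
    have hQ : a ^ 2 + b ^ 2 + c ^ 2 + a * b + b * c + a * c = 0 := by
      have hfac : (a + b) * (b + c) * (a + c) *
          (a ^ 2 + b ^ 2 + c ^ 2 + a * b + b * c + a * c) = 0 := by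
        linear_combination h5 + ((-1)*c^5 + (-2)*b*c^4 + (-4)*b^2*c^3 + (-4)*b^3*c^2 + (-2)*b^4*c + (-1)*b^5 + (-2)*a*c^4 + (-8)*a*b*c^3 + (-12)*a*b^2*c^2 + (-8)*a*b^3*c + (-2)*a*b^4 + (-4)*a^2*c^3 + (-12)*a^2*b*c^2 + (-12)*a^2*b^2*c + (-4)*a^2*b^3 + (-4)*a^3*c^2 + (-8)*a^3*b*c + (-4)*a^3*b^2 + (-2)*a^4*c + (-2)*a^4*b + (-1)*a^5) * h2
      rcases mul_eq_zero.mp hfac with h | h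
      · rcases mul_eq_zero.mp h with h | h
        · rcases mul_eq_zero.mp h with h | h
          · exact absurd h hu
          · exact absurd h hv
        · exact absurd h hw
      · exact h
    -- from h7 : Q^2 + abc(a+b+c) = 0
    have hQ7 : (a ^ 2 + b ^ 2 + c ^ 2 + a * b + b * c + a * c) ^ 2 +
        a * b * c * (a + b + c) = 0 := by
      have hfac : (a + b) * (b + c) * (a + c) *
          ((a ^ 2 + b ^ 2 + c ^ 2 + a * b + b * c + a * c) ^ 2 +
            a * b * c * (a + b + c)) = 0 := by
        linear_combination h7 + ((-1)*c^7 + (-3)*b*c^6 + (-9)*b^2*c^5 + (-15)*b^3*c^4 + (-15)*b^4*c^3 + (-9)*b^5*c^2 + (-3)*b^6*c + (-1)*b^7 + (-3)*a*c^6 + (-18)*a*b*c^5 + (-45)*a*b^2*c^4 + (-60)*a*b^3*c^3 + (-45)*a*b^4*c^2 + (-18)*a*b^5*c + (-3)*a*b^6 + (-9)*a^2*c^5 + (-45)*a^2*b*c^4 + (-90)*a^2*b^2*c^3 + (-90)*a^2*b^3*c^2 + (-45)*a^2*b^4*c + (-9)*a^2*b^5 + (-15)*a^3*c^4 + (-60)*a^3*b*c^3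 + (-90)*a^3*b^2*c^2 + (-60)*a^3*b^3*c + (-15)*a^3*b^4 + (-15)*a^4*c^3 + (-45)*a^4*b*c^2 + (-45)*a^4*b^2*c + (-15)*a^4*b^3 + (-9)*a^5*c^2 + (-18)*a^5*b*c + (-9)*a^5*b^2 + (-3)*a^6*c + (-3)*a^6*b + (-1)*a^7) * h2
      rcases mul_eq_zero.mp hfac with h | h
      · rcases mul_eq_zero.mp h with h | h
        · rcases mul_eq_zero.mp h with h | h
          · exact absurd h hu
          · exact absurd h hv
        · exact absurd h hw
      · exact h
    have habcd : a * b * c * (a + b + c) = 0 := by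
      linear_combination hQ7 + (a ^ 2 + b ^ 2 + c ^ 2 + a * b + b * c + a * c) * hQ - (a ^ 2 + b ^ 2 + c ^ 2 + a * b + b * c + a * c) ^ 2 * h2
    have : a * b * c * (a + b + c) ≠ 0 :=
      mul_ne_zero (mul_ne_zero (mul_ne_zero ha0 hb0) hc0) hd0
    exact this habcd
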